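/- I₁(2t)/I₀(2t) → 1 as t → +∞, where I₀, I₁ are the modified Bessel functions of the first kind of orders 0 and 1. -/

import Mathlib

open Filter

namespace Stmt13Aux

noncomputable def A (t : ℝ) (n : ℕ) : ℝ := t ^ (2 * n) / ((n.factorial : ℝ) ^ 2)
noncomputable def B (t : ℝ) (n : ℕ) : ℝ :=
  t ^ (2 * n + 1) / ((n.factorial : ℝ) * ((n + 1).factorial : ℝ))

lemma A_nonneg {t : ℝ} (ht : 0 ≤ t) (n : ℕ) : 0 ≤ A t n := by
  unfold A; positivity

lemma B_nonneg {t : ℝ} (ht : 0 ≤ t) (n : ℕ) : 0 ≤ B t n := by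
  unfold B; positivity

lemma fact_pos (n : ℕ) : (0:ℝ) < (n.factorial : ℝ) := by
  exact_mod_cast n.factorial_pos

lemma B_eq (t : ℝ) (n : ℕ) : B t n = A t n * (t / (n + 1)) := by
  unfold A B
  rw [Nat.factorial_succ]
  have h1 := fact_pos n
  have h2 : ((n:ℝ) + 1) ≠ 0 := by positivity
  push_cast
  field_simp
  ring

lemma A_succ (t : ℝ) (n : ℕ) : A t (n + 1) = A t n * (t / (n + 1)) ^ 2 := by
  unfold A
  rw [Nat.factorial_succ]
  have h1 := fact_pos n
  have h2 : ((n:ℝ) + 1) ≠ 0 := by positivity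
  push_cast
  field_simp
  ring

lemma shift_eq (t : ℝ) (n : ℕ) : ((n:ℝ) + 1) * A t (n + 1) = t * B t n := by
  rw [A_succ, B_eq]
  have h2 : ((n:ℝ) + 1) ≠ 0 := by positivity
  field_simp

lemma sumA {t : ℝ} (ht : 0 ≤ t) : Summable (A t) := by
  apply Summable.of_nonneg_of_le (A_nonneg ht)
    (f := fun n : ℕ => (t ^ 2) ^ n / (n.factorial : ℝ))
  · intro n
    unfold A
    rw [pow_mul]
    apply div_le_div_of_nonneg_left (by positivity) (fact_pos n)
    exact_mod_cast Nat.le_self_pow two_ne_zero _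
  · exact Real.summable_pow_div_factorial (t ^ 2)

lemma sumA1 {t : ℝ} (ht : 0 ≤ t) : Summable (fun n : ℕ => ((n:ℝ) + 1) * A t n) := by
  apply Summable.of_nonneg_of_le
    (fun n : ℕ => by have := A_nonneg ht n; positivity)
    (f := fun n : ℕ => (2 * t ^ 2) ^ n / (n.factorial : ℝ))
  · intro n
    unfold A
    rw [pow_mul, mul_pow, ← mul_div_assoc]
    rw [div_le_div_iff₀ (by positivity) (fact_pos n)]
    have h1 : ((n:ℝ) + 1) ≤ 2 ^ n := by
      have : n < 2 ^ n := Nat.lt_two_pow_self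
      exact_mod_cast this
    have h2 : (n.factorial : ℝ) ≤ (n.factorial : ℝ) ^ 2 := by
      nlinarith [fact_pos n, (show (1:ℝ) ≤ n.factorial from by exact_mod_cast n.factorial_pos)]
    nlinarith [pow_nonneg (sq_nonneg t) n, sq_nonneg ((n.factorial : ℝ)), fact_pos n,
      mul_le_mul h1 h2 (le_of_lt (fact_pos n)) (by positivity : (0:ℝ) ≤ 2 ^ n)]
  · exact Real.summable_pow_div_factorial (2 * t ^ 2)

lemma sumB {t : ℝ} (ht : 0 ≤ t) : Summable (B t) := by
  apply Summable.of_nonneg_of_le (B_nonneg ht) (f := fun n : ℕ => A t n * t)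
  · intro n
    rw [B_eq]
    apply mul_le_mul_of_nonneg_left _ (A_nonneg ht n)
    rw [div_le_iff₀ (by positivity)]
    nlinarith [ht, Nat.cast_nonneg (α := ℝ) n]
  · exact (sumA ht).mul_right t

lemma sumN {t : ℝ} (ht : 0 ≤ t) : Summable (fun n : ℕ => (n:ℝ) * A t n) := by
  have : (fun n : ℕ => (n:ℝ) * A t n) = fun n : ℕ => ((n:ℝ) + 1) * A t n - A t n := by
    funext n; ring
  rw [this]
  exact (sumA1 ht).sub (sumA ht)

lemma bounds {t : ℝ} (ht : 1 ≤ t) :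
    1 - 1/(2*t) ≤ (∑' n, B t n) / (∑' n, A t n) ∧ (∑' n, B t n) / (∑' n, A t n) ≤ 1 := by
  have ht0 : (0:ℝ) < t := lt_of_lt_of_le one_pos ht
  have ht0' : (0:ℝ) ≤ t := ht0.le
  set D := ∑' n, A t n with hDdef
  set N := ∑' n, B t n with hNdef
  have hD1 : (1:ℝ) ≤ D := by
    have := Summable.le_tsum (sumA ht0') 0 (fun j _ => A_nonneg ht0' j)
    simpa [A, hDdef] using this
  have hD0 : (0:ℝ) < D := lt_of_lt_of_le one_pos hD1
  have hAshift : Summable (fun n : ℕ => A t (n + 1)) := (summable_nat_add_iff 1).2 (sumA ht0')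
  have hDshift : ∑' n : ℕ, A t (n + 1) = D - 1 := by
    have h0 := Summable.tsum_eq_zero_add (sumA ht0')
    have hA0 : A t 0 = 1 := by simp [A]
    rw [hA0] at h0
    linarith [h0]
  have hupper : N ≤ D := by
    have hptw : ∀ n : ℕ, B t n ≤ (A t n + A t (n + 1)) / 2 := by
      intro n
      rw [B_eq, A_succ]
      have hA := A_nonneg ht0' n
      nlinarith [mul_nonneg hA (sq_nonneg (t/((n:ℝ)+1) - 1))]
    have hsum2 : Summable (fun n : ℕ => (A t n + A t (n+1)) / 2) :=
      ((sumA ht0').add hAshift).div_const 2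
    have h1 := Summable.tsum_le_tsum hptw (sumB ht0') hsum2
    have h2 : ∑' n : ℕ, (A t n + A t (n+1))/2 = (D + (D - 1))/2 := by
      rw [tsum_div_const, Summable.tsum_add (sumA ht0') hAshift, hDshift]
    rw [h2] at h1
    linarith
  have hupper' : N / D ≤ 1 := (div_le_one hD0).2 hupper
  have hshiftsum : ∑' n : ℕ, ((n:ℝ)+1) * A t (n+1) = t * N := by
    rw [tsum_congr (fun n => shift_eq t n), tsum_mul_left]
  have hnA : ∑' n : ℕ, (n:ℝ) * A t n = t * N := by
    have h0 := Summable.tsum_eq_zero_add (sumN ht0')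
    simp only [Nat.cast_zero, zero_mul, zero_add] at h0
    rw [h0, ← hshiftsum]
    apply tsum_congr
    intro n
    push_cast
    ring
  have hA1 : ∑' n : ℕ, ((n:ℝ)+1) * A t n = t * N + D := by
    have e : (fun n : ℕ => ((n:ℝ)+1)*A t n) = fun n : ℕ => (n:ℝ)*A t n + A t n := by
      funext n; ring
    rw [e, Summable.tsum_add (sumN ht0') (sumA ht0'), hnA]
  have hptl : ∀ n : ℕ, 2 * A t n ≤ B t n + A t n * (((n:ℝ)+1)/t) := by
    intro n
    rw [B_eq]
    have hA := A_nonneg ht0' n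
    have hk : (0:ℝ) < (n:ℝ)+1 := by positivity
    have key : 2 ≤ t/((n:ℝ)+1) + ((n:ℝ)+1)/t := by
      rw [div_add_div _ _ (ne_of_gt hk) (ne_of_gt ht0), le_div_iff₀ (by positivity)]
      nlinarith [sq_nonneg (t - ((n:ℝ)+1))]
    nlinarith [mul_le_mul_of_nonneg_left key hA]
  have hsumr2 : Summable (fun n : ℕ => A t n * (((n:ℝ)+1)/t)) := by
    have e : (fun n : ℕ => A t n * (((n:ℝ)+1)/t)) = fun n : ℕ => (((n:ℝ)+1) * A t n) * (1/t) := by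
      funext n; ring
    rw [e]
    exact (sumA1 ht0').mul_right _
  have hsumr : Summable (fun n : ℕ => B t n + A t n * (((n:ℝ)+1)/t)) :=
    (sumB ht0').add hsumr2
  have hlow := Summable.tsum_le_tsum hptl ((sumA ht0').mul_left 2) hsumr
  have hL : ∑' n : ℕ, 2 * A t n = 2 * D := tsum_mul_left
  have hR : ∑' n : ℕ, (B t n + A t n * (((n:ℝ)+1)/t)) = N + (t*N + D)/t := by
    rw [Summable.tsum_add (sumB ht0') hsumr2]
    congr 1
    have e : (fun n : ℕ => A t n * (((n:ℝ)+1)/t)) = fun n : ℕ => (((n:ℝ)+1) * A t n) / t := by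
      funext n; ring
    rw [e, tsum_div_const, hA1]
  rw [hL, hR] at hlow
  have hdiv : (t*N + D)/t = N + D/t := by
    field_simp
  have htotal : 2*D ≤ 2*N + D/t := by
    rw [hdiv] at hlow; linarith
  have hlower : 1 - 1/(2*t) ≤ N / D := by
    rw [le_div_iff₀ hD0]
    have e : (1 - 1/(2*t))*D = D - (D/t)/2 := by
      field_simp
    rw [e]
    linarith
  exact ⟨hlower, hupper'⟩

end Stmt13Aux

theorem stmt13 :
    Filter.Tendsto (fun t : ℝ =>
      (∑' n : ℕ, t ^ (2 * n + 1) / ((n.factorial : ℝ) * ((n + 1).factorial : ℝ))) /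
      (∑' n : ℕ, t ^ (2 * n) / ((n.factorial : ℝ) ^ 2)))
      Filter.atTop (nhds 1) := by
  have hg : Filter.Tendsto (fun t : ℝ => 1 - 1/(2*t)) atTop (nhds 1) := by
    have h2 : Filter.Tendsto (fun t : ℝ => 2*t) atTop atTop :=
      Filter.tendsto_id.const_mul_atTop two_pos
    have h1 : Filter.Tendsto (fun t : ℝ => 1/(2*t)) atTop (nhds 0) := by
      simpa [one_div, Pi.inv_def, mul_comm] using h2.inv_tendsto_atTop
    simpa using tendsto_const_nhds.sub h1
  apply tendsto_of_tendsto_of_tendsto_of_le_of_le' hg tendsto_const_nhds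
  · filter_upwards [eventually_ge_atTop 1] with t ht
    simpa [Stmt13Aux.A, Stmt13Aux.B] using (Stmt13Aux.bounds ht).1
  · filter_upwards [eventually_ge_atTop 1] with t ht
    simpa [Stmt13Aux.A, Stmt13Aux.B] using (Stmt13Aux.bounds ht).2
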